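/- D(e^{iπ/3}) − D(e^{−iπ/3}) = (3√3/2) · L(χ₋₃, 2), where D is the Bloch–Wigner dilogarithm, χ₋₃ is the unique nontrivial Dirichlet character modulo 3, and L(χ₋₃, 2) = Σ_{n≥1} χ₋₃(n)/n². -/

import Mathlib

open scoped Real

/-- The dilogarithm `Li₂`, the analytic continuation of `∑_{n ≥ 1} zⁿ / n²`
(which is given for `|z| ≤ 1`), via the classical integral formula
`Li₂(z) = -∫₀¹ log(1 - z t) / t dt` (principal branch). -/
noncomputable def Li2 (z : ℂ) : ℂ :=
  -∫ t in (0:ℝ)..1, Complex.log (1 - z * t) / t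

/-- The Bloch–Wigner dilogarithm `D(z) = Im(Li₂(z)) + arg(1 - z) · log |z|`. -/
noncomputable def blochWigner (z : ℂ) : ℝ :=
  (Li2 z).im + (1 - z).arg * Real.log ‖z‖

section Aux

open Complex MeasureTheory

lemma BW.norm_natCast_add_one (n : ℕ) : ‖((n : ℂ) + 1)‖ = (n : ℝ) + 1 := by
  rw [show ((n:ℂ)+1) = ((n+1:ℕ):ℂ) by push_cast; ring, Complex.norm_natCast]
  push_cast; ring

lemma BW.summable_bound : Summable fun n : ℕ => 1 / ((n : ℝ) + 1) ^ 2 := by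
  have := (summable_nat_add_iff (f := fun n : ℕ => 1 / (n : ℝ) ^ 2) 1).mpr
    ((Real.summable_one_div_nat_pow (p := 2)).mpr one_lt_two)
  refine this.congr fun n => by push_cast; ring_nf

lemma BW.Li2_eq_tsum {z : ℂ} (hz : ‖z‖ ≤ 1) :
    Li2 z = ∑' n : ℕ, z ^ (n + 1) / ((n : ℂ) + 1) ^ 2 := by
  have h1 : Li2 z = -∫ t in Set.Ioo (0:ℝ) 1, Complex.log (1 - z * t) / t := by
    rw [Li2, intervalIntegral.integral_of_le zero_le_one,
      ← MeasureTheory.integral_Ioc_eq_integral_Ioo]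
  set F : ℕ → ℝ → ℂ := fun n t => z ^ (n + 1) * (t : ℂ) ^ n / ((n : ℂ) + 1) with hF
  have hn1 : ∀ n : ℕ, ((n : ℂ) + 1) ≠ 0 := fun n => by
    exact_mod_cast Nat.cast_add_one_ne_zero (R := ℂ) n
  have hpt : ∀ t ∈ Set.Ioo (0:ℝ) 1,
      HasSum (fun n => F n t) (-(Complex.log (1 - z * t) / t)) := by
    intro t ht
    have hnorm : ‖z * (t : ℂ)‖ < 1 := by
      rw [norm_mul, Complex.norm_real, Real.norm_of_nonneg ht.1.le]
      nlinarith [ht.1, ht.2, norm_nonneg z]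
    have h := (hasSum_taylorSeries_neg_log hnorm).div_const (t : ℂ)
    have h2 : HasSum (fun n : ℕ => (z * t) ^ (n + 1) / (↑(n + 1) : ℂ) / t)
        (-(Complex.log (1 - z * t) / t)) := by
      refine (hasSum_nat_add_iff (f := fun n : ℕ => (z * (t:ℂ)) ^ n / (n : ℂ) / t) 1).mpr ?_
      simpa [neg_div] using h
    refine h2.congr_fun fun n => ?_
    have ht0 : (t : ℂ) ≠ 0 := by exact_mod_cast ht.1.ne'
    have hns : ((n + 1 : ℕ) : ℂ) ≠ 0 := Nat.cast_ne_zero.mpr (Nat.succ_ne_zero n)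
    simp only [hF]
    rw [div_div, div_eq_div_iff (hn1 n) (mul_ne_zero hns ht0)]
    push_cast
    ring
  have hmeasIoo : MeasurableSet (Set.Ioo (0:ℝ) 1) := measurableSet_Ioo
  have hint : ∀ n : ℕ, IntegrableOn (F n) (Set.Ioo (0:ℝ) 1) := by
    intro n
    have hc : Continuous (F n) := by
      apply Continuous.div_const
      exact continuous_const.mul (Complex.continuous_ofReal.pow n)
    exact (hc.integrableOn_Icc (a := 0) (b := 1)).mono_set Set.Ioo_subset_Icc_self
  have hval : ∀ n : ℕ, ∫ t in Set.Ioo (0:ℝ) 1, (t:ℝ) ^ n = 1 / (n + 1) := by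
    intro n
    rw [← MeasureTheory.integral_Ioc_eq_integral_Ioo,
      ← intervalIntegral.integral_of_le zero_le_one, integral_pow]
    simp
  have hnormval : ∀ n : ℕ, (∫ t in Set.Ioo (0:ℝ) 1, ‖F n t‖)
      = ‖z‖ ^ (n + 1) / (n + 1) * (1 / (n + 1)) := by
    intro n
    rw [← hval n, ← integral_const_mul]
    refine setIntegral_congr_fun hmeasIoo fun t ht => ?_
    simp only [hF, norm_div, norm_mul, norm_pow, Complex.norm_real,
      Real.norm_of_nonneg ht.1.le, BW.norm_natCast_add_one]
    ring
  have hsumnorm : Summable fun n : ℕ => ∫ t in Set.Ioo (0:ℝ) 1, ‖F n t‖ := by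
    refine Summable.of_nonneg_of_le (fun n => ?_) (fun n => ?_) BW.summable_bound
    · rw [hnormval n]; positivity
    · rw [hnormval n, sq, ← one_div_mul_one_div]
      have hle : ‖z‖ ^ (n + 1) ≤ 1 := pow_le_one₀ (norm_nonneg z) hz
      gcongr
  have hswap := MeasureTheory.integral_tsum_of_summable_integral_norm
    (μ := volume.restrict (Set.Ioo (0:ℝ) 1)) (F := F) (fun n => hint n) hsumnorm
  have hI : ∫ t in Set.Ioo (0:ℝ) 1, (∑' n, F n t)
      = -∫ t in Set.Ioo (0:ℝ) 1, Complex.log (1 - z * t) / t := by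
    rw [← integral_neg]
    refine setIntegral_congr_fun hmeasIoo fun t ht => ?_
    exact (hpt t ht).tsum_eq
  have hterm : ∀ n : ℕ, (∫ t in Set.Ioo (0:ℝ) 1, F n t)
      = z ^ (n + 1) / ((n : ℂ) + 1) ^ 2 := by
    intro n
    have : ∀ t ∈ Set.Ioo (0:ℝ) 1, F n t = (z ^ (n+1) / ((n:ℂ)+1)) * ((t:ℝ)^n : ℝ) := by
      intro t ht; simp only [hF]; push_cast; ring
    rw [setIntegral_congr_fun hmeasIoo this, integral_const_mul,
      show (∫ t in Set.Ioo (0:ℝ) 1, ((t^n : ℝ) : ℂ)) = ((∫ t in Set.Ioo (0:ℝ) 1, t^n : ℝ) : ℂ)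
        from integral_ofReal, hval n]
    push_cast
    rw [sq]
    field_simp
  rw [h1, ← hI, ← hswap]
  exact tsum_congr hterm

noncomputable def BW.zz : ℂ := Complex.exp ((π / 3 : ℝ) * Complex.I)
noncomputable def BW.ww : ℂ := Complex.exp ((-(π / 3) : ℝ) * Complex.I)

namespace BW

lemma sq3 : ((Real.sqrt 3 : ℝ) : ℂ) ^ 2 = 3 := by
  norm_cast
  rw [Real.sq_sqrt] <;> norm_num

lemma zz_eq : zz = 1 / 2 + (Real.sqrt 3 : ℝ) / 2 * Complex.I := by
  rw [zz, Complex.exp_mul_I, ← Complex.ofReal_cos, ← Complex.ofReal_sin,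
    Real.cos_pi_div_three, Real.sin_pi_div_three]
  push_cast
  ring

lemma ww_eq : ww = 1 / 2 - (Real.sqrt 3 : ℝ) / 2 * Complex.I := by
  rw [ww, Complex.exp_mul_I, ← Complex.ofReal_cos, ← Complex.ofReal_sin,
    Real.cos_neg, Real.sin_neg, Real.cos_pi_div_three, Real.sin_pi_div_three]
  push_cast
  ring

lemma z_sub_w : zz - ww = (Real.sqrt 3 : ℝ) * Complex.I := by
  rw [zz_eq, ww_eq]; ring

lemma z2 : zz ^ 2 = zz - 1 := by
  rw [zz_eq]
  linear_combination (Complex.I ^ 2 / 4) * sq3 + (3 / 4) * Complex.I_sq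

lemma w2 : ww ^ 2 = ww - 1 := by
  rw [ww_eq]
  linear_combination (Complex.I ^ 2 / 4) * sq3 + (3 / 4) * Complex.I_sq

lemma z3 : zz ^ 3 = -1 := by linear_combination (zz + 1) * z2
lemma w3 : ww ^ 3 = -1 := by linear_combination (ww + 1) * w2
lemma z6 : zz ^ 6 = 1 := by linear_combination (zz ^ 3 - 1) * z3
lemma w6 : ww ^ 6 = 1 := by linear_combination (ww ^ 3 - 1) * w3

lemma chi_zero (χ : DirichletCharacter ℂ 3) : χ 0 = 0 := χ.map_nonunit (by decide)

lemma chi_two (χ : DirichletCharacter ℂ 3) (hχ : χ ≠ 1) : χ 2 = -1 := by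
  have h4 : χ 2 * χ 2 = 1 := by
    rw [← map_mul, show ((2 : ZMod 3) * 2) = 1 by decide, map_one]
  rcases mul_self_eq_one_iff.mp h4 with h | h
  · exfalso
    apply hχ
    refine MulChar.ext fun a => ?_
    have ha : ∀ u : (ZMod 3)ˣ, (u : ZMod 3) = 1 ∨ (u : ZMod 3) = 2 := by decide
    rw [MulChar.one_apply a.isUnit]
    rcases ha a with ha' | ha' <;> rw [ha']
    · exact map_one χ
    · exact h
  · exact h

lemma key (χ : DirichletCharacter ℂ 3) (hχ : χ ≠ 1) (m : ℕ) :
    zz ^ m - ww ^ m = ((Real.sqrt 3 : ℝ) : ℂ) * (-1 : ℂ) ^ (m + 1) * χ (m : ZMod 3) * Complex.I := by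
  obtain ⟨q, r, hr, rfl⟩ : ∃ q r, r < 6 ∧ m = 6 * q + r :=
    ⟨m / 6, m % 6, Nat.mod_lt _ (by norm_num), (Nat.div_add_mod m 6).symm⟩
  have hz : zz ^ (6 * q + r) = zz ^ r := by rw [pow_add, pow_mul, z6, one_pow, one_mul]
  have hw : ww ^ (6 * q + r) = ww ^ r := by rw [pow_add, pow_mul, w6, one_pow, one_mul]
  have hneg : (-1 : ℂ) ^ (6 * q + r + 1) = (-1) ^ (r + 1) := by
    rw [show 6 * q + r + 1 = 6 * q + (r + 1) by omega, pow_add,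
      Even.neg_one_pow ⟨3 * q, by ring⟩, one_mul]
  have hcast : ((6 * q + r : ℕ) : ZMod 3) = (r : ZMod 3) := by
    push_cast
    rw [show ((6 : ZMod 3)) = 0 by decide]
    ring
  rw [hz, hw, hneg, hcast]
  interval_cases r
  · rw [show ((0:ℕ) : ZMod 3) = 0 by decide, chi_zero]; simp
  · rw [show ((1:ℕ) : ZMod 3) = 1 by decide, map_one]
    norm_num
    linear_combination z_sub_w
  · rw [show ((2:ℕ) : ZMod 3) = 2 by decide, chi_two χ hχ]
    norm_num
    linear_combination z2 - w2 + z_sub_w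
  · rw [show ((3:ℕ) : ZMod 3) = 0 by decide, chi_zero]
    norm_num
    linear_combination z3 - w3
  · rw [show ((4:ℕ) : ZMod 3) = 1 by decide, map_one]
    norm_num
    linear_combination zz * z3 - ww * w3 - z_sub_w
  · rw [show ((5:ℕ) : ZMod 3) = 2 by decide, chi_two χ hχ]
    norm_num
    linear_combination zz^2 * z3 - ww^2 * w3 - z2 + w2 - z_sub_w

end BW

end Aux

/-- `D(e^{iπ/3}) − D(e^{−iπ/3}) = (3√3/2) · L(χ₋₃, 2)`, where `χ₋₃` is the unique nontrivial
Dirichlet character modulo 3. -/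
theorem blochWigner_diff_eq_L2 (χ : DirichletCharacter ℂ 3) (hχ : χ ≠ 1) :
    (↑(blochWigner (Complex.exp ((π / 3 : ℝ) * Complex.I)) -
        blochWigner (Complex.exp ((-(π / 3) : ℝ) * Complex.I))) : ℂ) =
      ((3 * Real.sqrt 3 / 2 : ℝ) : ℂ) * DirichletCharacter.LFunction χ 2 := by
  show (↑(blochWigner BW.zz - blochWigner BW.ww) : ℂ) = _
  -- basic facts about zz, ww
  have habs_z : ‖BW.zz‖ = 1 := Complex.norm_exp_ofReal_mul_I _
  have habs_w : ‖BW.ww‖ = 1 := Complex.norm_exp_ofReal_mul_I _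
  have hnz : ‖BW.zz‖ ≤ 1 := le_of_eq habs_z
  have hnw : ‖BW.ww‖ ≤ 1 := le_of_eq habs_w
  have hconj : BW.ww = (starRingEnd ℂ) BW.zz := by
    rw [BW.zz_eq, BW.ww_eq]
    apply Complex.ext <;> simp [map_ofNat]
  -- the series
  set f1 : ℕ → ℂ := fun n => BW.zz ^ (n + 1) / ((n : ℂ) + 1) ^ 2 with hf1
  set f2 : ℕ → ℂ := fun n => BW.ww ^ (n + 1) / ((n : ℂ) + 1) ^ 2 with hf2
  have hnorm1 : ∀ (u : ℂ), ‖u‖ ≤ 1 → ∀ n : ℕ, ‖u ^ (n + 1) / ((n : ℂ) + 1) ^ 2‖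
      ≤ 1 / ((n : ℝ) + 1) ^ 2 := by
    intro u hu n
    rw [norm_div, norm_pow, norm_pow, BW.norm_natCast_add_one]
    gcongr
    exact pow_le_one₀ (norm_nonneg u) hu
  have hs1 : Summable f1 := Summable.of_norm_bounded BW.summable_bound (hnorm1 _ hnz)
  have hs2 : Summable f2 := Summable.of_norm_bounded BW.summable_bound (hnorm1 _ hnw)
  -- S2 = conj S1
  have hf21 : ∀ n, f2 n = (starRingEnd ℂ) (f1 n) := by
    intro n
    simp only [hf1, hf2, map_div₀, map_pow, map_add, map_one, Complex.conj_natCast, hconj]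
  have hS21 : (∑' n, f2 n) = (starRingEnd ℂ) (∑' n, f1 n) := by
    rw [tsum_congr hf21]
    exact (Complex.hasSum_conj.mpr (by simpa using hs1.hasSum)).tsum_eq
  -- Dirichlet series
  set g : ℕ → ℂ := fun n => χ (n : ZMod 3) / (n : ℂ) ^ 2 with hg_def
  have hg : Summable g := by
    refine Summable.of_norm_bounded
      ((Real.summable_one_div_nat_pow (p := 2)).mpr one_lt_two) fun n => ?_
    rcases Nat.eq_zero_or_pos n with rfl | hn
    · simp [hg_def, BW.chi_zero]
    have hval : ∀ x : ZMod 3, ‖χ x‖ ≤ 1 := by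
      intro x
      have hx : x = 0 ∨ x = 1 ∨ x = 2 := by revert x; decide
      rcases hx with rfl | rfl | rfl
      · simp [BW.chi_zero]
      · simp
      · rw [BW.chi_two χ hχ]; simp
    simp only [hg_def, norm_div, norm_pow, Complex.norm_natCast]
    have hn0 : (0:ℝ) < (n:ℝ) ^ 2 := by positivity
    rw [div_le_div_iff₀ hn0 hn0]
    nlinarith [hval ((n : ZMod 3))]
  set A : ℂ := ∑' n, g n with hA_def
  -- even/odd manipulation
  have hgeven : ∀ k : ℕ, g (2 * k) = -(1/4 : ℂ) * g k := by
    intro k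
    rcases Nat.eq_zero_or_pos k with rfl | hk
    · simp [hg_def, BW.chi_zero]
    have hk0 : ((k : ℂ)) ≠ 0 := Nat.cast_ne_zero.mpr hk.ne'
    simp only [hg_def]
    rw [show (((2 * k : ℕ)) : ZMod 3) = 2 * (k : ZMod 3) by push_cast; ring, map_mul,
      BW.chi_two χ hχ]
    push_cast
    rw [show -(1/4 : ℂ) * (χ ↑k / ↑k^2) = (-(1/4) * χ ↑k) / (↑k:ℂ)^2 from (mul_div_assoc _ _ _).symm,
      div_eq_div_iff (pow_ne_zero 2 (by simpa using hk0)) (pow_ne_zero 2 hk0)]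
    ring
  have hse : Summable fun k => g (2 * k) := hg.comp_injective fun a b h => by omega
  have hso : Summable fun k => g (2 * k + 1) := hg.comp_injective fun a b h => by omega
  have hEA : ∑' k, g (2 * k) = -(1/4 : ℂ) * A := by rw [tsum_congr hgeven, tsum_mul_left]
  have hOA : ∑' k, g (2 * k + 1) = (5/4 : ℂ) * A := by
    have h := tsum_even_add_odd hse hso
    rw [hEA] at h
    linear_combination h
  set fB : ℕ → ℂ := fun m => (-1 : ℂ) ^ (m + 1) * g m with hfB_def
  have hfBe : ∀ k : ℕ, fB (2 * k) = (1/4 : ℂ) * g k := by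
    intro k
    simp only [hfB_def]
    rw [show (-1 : ℂ) ^ (2 * k + 1) = -1 by
      rw [pow_succ, pow_mul]; simp, hgeven k]
    ring
  have hfBo : ∀ k : ℕ, fB (2 * k + 1) = g (2 * k + 1) := by
    intro k
    simp only [hfB_def]
    rw [show (-1 : ℂ) ^ (2 * k + 1 + 1) = 1 by
      rw [show 2 * k + 1 + 1 = 2 * (k + 1) by omega, pow_mul]; simp]
    ring
  have hsbe : Summable fun k => fB (2 * k) := by
    refine Summable.congr (hg.mul_left (1/4 : ℂ)) fun k => (hfBe k).symm
  have hsbo : Summable fun k => fB (2 * k + 1) := hso.congr fun k => (hfBo k).symm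
  have hB : ∑' m, fB m = (3/2 : ℂ) * A := by
    rw [← tsum_even_add_odd hsbe hsbo, tsum_congr hfBe, tsum_congr hfBo, tsum_mul_left, hOA]
    ring
  have hfB : Summable fB := by
    refine Summable.of_norm ?_
    refine (hg.norm.congr fun m => ?_)
    simp only [hfB_def, norm_mul, norm_pow, norm_neg, norm_one, one_pow, one_mul]
  -- L-function equals A
  have hL : DirichletCharacter.LFunction χ 2 = A := by
    rw [DirichletCharacter.LFunction_eq_LSeries χ (by norm_num), LSeries]
    refine tsum_congr fun n => ?_
    rw [LSeries.term_def]
    rcases eq_or_ne n 0 with rfl | hn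
    · simp [hg_def, BW.chi_zero]
    · simp only [if_neg hn, hg_def]
      rw [show ((2:ℂ)) = ((2:ℕ):ℂ) by norm_num, Complex.cpow_natCast]
  -- difference of the two Li2 series
  have hdiff : (∑' n, f1 n) - (∑' n, f2 n) = ((Real.sqrt 3 : ℝ) : ℂ) * Complex.I
      * ((3/2 : ℂ) * A) := by
    rw [← Summable.tsum_sub hs1 hs2]
    have hterm : ∀ n : ℕ, f1 n - f2 n
        = ((Real.sqrt 3 : ℝ) : ℂ) * Complex.I * fB (n + 1) := by
      intro n
      simp only [hf1, hf2, hfB_def, hg_def]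
      rw [div_sub_div_same, BW.key χ hχ (n + 1)]
      push_cast
      ring
    rw [tsum_congr hterm, tsum_mul_left]
    congr 1
    have h0 : fB 0 = 0 := by simp [hfB_def, hg_def, BW.chi_zero]
    have := Summable.tsum_eq_zero_add hfB
    rw [h0, zero_add] at this
    rw [← this, hB]
  -- put everything together
  have hbwz : blochWigner BW.zz = (Li2 BW.zz).im := by
    rw [blochWigner, habs_z, Real.log_one, mul_zero, add_zero]
  have hbww : blochWigner BW.ww = (Li2 BW.ww).im := by
    rw [blochWigner, habs_w, Real.log_one, mul_zero, add_zero]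
  rw [hbwz, hbww, BW.Li2_eq_tsum hnz, BW.Li2_eq_tsum hnw, hL]
  apply mul_right_cancel₀ Complex.I_ne_zero
  have him : (∑' n, f2 n).im = -(∑' n, f1 n).im := by rw [hS21, Complex.conj_im]
  calc (↑((∑' n, f1 n).im - (∑' n, f2 n).im) : ℂ) * Complex.I
      = (↑(2 * (∑' n, f1 n).im) : ℂ) * Complex.I := by rw [him]; push_cast; ring
    _ = (∑' n, f1 n) - (starRingEnd ℂ) (∑' n, f1 n) := (Complex.sub_conj _).symm
    _ = (∑' n, f1 n) - (∑' n, f2 n) := by rw [hS21]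
    _ = ((Real.sqrt 3 : ℝ) : ℂ) * Complex.I * ((3/2 : ℂ) * A) := hdiff
    _ = ((3 * Real.sqrt 3 / 2 : ℝ) : ℂ) * A * Complex.I := by push_cast; ring
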